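/- Let λ be a partition and m ≥ 0. Then dim F^(n)_λ = dim F^(m+n)_{λ'} holds for every n ≥ ℓ(λ) if and only if λ' is m-asymmetric (equivalently, λ has Frobenius coordinates (α+m | α) for some strict partition α). Here dim F^(n)_π = Π_{u∈π} (n+c(u))/h(u). -/

import Mathlib

/-- The dimension of the irreducible gl_N-module with highest weight the partition μ,
given by the hook content formula: Π_{u ∈ μ} (N + c(u)) / h(u). -/
noncomputable def dimF (N : ℕ) (μ : YoungDiagram) : ℚ :=
  ∏ u ∈ μ.cells,
    ((N : ℚ) + ((u.2 : ℚ) - (u.1 : ℚ))) /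
      ((μ.rowLen u.1 + μ.colLen u.2 - u.1 - u.2 - 1 : ℕ) : ℚ)

/-- A Young diagram `μ` is `m`-asymmetric if its Frobenius coordinates `(α|β)` satisfy
`β i = α i + m` for all `i` up to the rank, i.e. `μ.colLen i = μ.rowLen i + m` for each
diagonal cell `(i,i) ∈ μ`. -/
def YoungDiagram.IsAsymmetric (m : ℕ) (μ : YoungDiagram) : Prop :=
  ∀ i : ℕ, (i, i) ∈ μ → μ.colLen i = μ.rowLen i + m

namespace AsymAux

open Finset

variable (μ : YoungDiagram)

/-- arm coordinate of diagonal `i` -/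
def A (i : ℕ) : ℤ := (μ.rowLen i : ℤ) - i - 1
/-- leg coordinate of diagonal `i` -/
def B (i : ℕ) : ℤ := (μ.colLen i : ℤ) - i - 1
/-- number of rows -/
def L : ℕ := μ.colLen 0
/-- multiset of contents -/
def C : Multiset ℤ := μ.cells.val.map (fun u => (u.2 : ℤ) - u.1)
/-- diagonal `i` meets content `k` -/
def cond (k : ℤ) (i : ℕ) : Prop := -B μ i ≤ k ∧ k ≤ A μ i

instance (k : ℤ) : DecidablePred (cond μ k) := fun i => by unfold cond; infer_instance

/-- number of cells of content `k` counted via diagonals -/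
def g (k : ℤ) : ℕ := ((Finset.range (L μ)).filter (cond μ k)).card

lemma A_anti {i j : ℕ} (h : j ≤ i) : A μ i ≤ A μ j := by
  have := μ.rowLen_anti j i h
  unfold A; omega

lemma B_anti {i j : ℕ} (h : j ≤ i) : B μ i ≤ B μ j := by
  have := μ.colLen_anti j i h
  unfold B; omega

lemma cond_anti {k : ℤ} {i j : ℕ} (h : j ≤ i) (hc : cond μ k i) : cond μ k j := by
  obtain ⟨h1, h2⟩ := hc
  have := A_anti μ h; have := B_anti μ h
  exact ⟨by omega, by omega⟩

lemma cond_diag {k : ℤ} {i : ℕ} (hc : cond μ k i) : (i, i) ∈ μ := by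
  obtain ⟨h1, h2⟩ := hc
  rw [YoungDiagram.mem_iff_lt_colLen]
  simp only [A, B] at h1 h2
  rcases le_or_gt 0 k with hk | hk
  · -- A i ≥ 0, so (i,i) ∈ μ via row, then column
    have hrow : (i, i) ∈ μ := by
      rw [YoungDiagram.mem_iff_lt_rowLen]; omega
    rwa [YoungDiagram.mem_iff_lt_colLen] at hrow
  · omega

lemma cond_lt_L {k : ℤ} {i : ℕ} (hc : cond μ k i) : i < L μ := by
  have h := cond_diag μ hc
  rw [YoungDiagram.mem_iff_lt_colLen] at h
  exact lt_of_lt_of_le h (μ.colLen_anti 0 i (Nat.zero_le i))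

/-- Lemma E : membership in the diagonal count -/
lemma lt_g_iff {k : ℤ} {i : ℕ} : i < g μ k ↔ cond μ k i := by
  constructor
  · intro h
    by_contra hc
    have hsub : (Finset.range (L μ)).filter (cond μ k) ⊆ Finset.range i := by
      intro j hj
      simp only [mem_filter, mem_range] at hj ⊢
      by_contra hji
      exact hc (cond_anti μ (by omega) hj.2)
    have := Finset.card_le_card hsub
    simp only [card_range] at this
    unfold g at h; omega
  · intro hc
    have hsub : Finset.range (i + 1) ⊆ (Finset.range (L μ)).filter (cond μ k) := by
      intro j hj
      simp only [mem_range] at hj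
      have hcj := cond_anti μ (by omega : j ≤ i) hc
      simp only [mem_filter, mem_range]
      exact ⟨cond_lt_L μ hcj, hcj⟩
    have := Finset.card_le_card hsub
    simp only [card_range] at this
    unfold g; omega

/-- counting cells of content `k` equals the diagonal count -/
lemma count_C_eq_g (k : ℤ) : (C μ).count k = g μ k := by
  unfold C g
  rw [Multiset.count_map]
  rw [show Multiset.card (Multiset.filter (fun a => k = (a.2 : ℤ) - a.1) μ.cells.val)
      = (μ.cells.filter (fun a => k = (a.2 : ℤ) - a.1)).card from rfl]
  apply Finset.card_bij (fun u _ => min u.1 u.2)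
  · intro u hu
    simp only [mem_filter, YoungDiagram.mem_cells] at hu
    obtain ⟨hmem, hk⟩ := hu
    have hAu : u.2 < μ.rowLen u.1 := YoungDiagram.mem_iff_lt_rowLen.mp hmem
    have hBu : u.1 < μ.colLen u.2 := YoungDiagram.mem_iff_lt_colLen.mp hmem
    have hdiag : (min u.1 u.2, min u.1 u.2) ∈ μ := μ.up_left_mem (by omega) (by omega) hmem
    have hcond : cond μ k (min u.1 u.2) := by
      rcases le_total u.1 u.2 with h | h
      · rw [min_eq_left h] at hdiag ⊢
        have hc2 : u.1 < μ.colLen u.1 := YoungDiagram.mem_iff_lt_colLen.mp hdiag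
        refine ⟨?_, ?_⟩ <;> simp only [A, B] <;> omega
      · rw [min_eq_right h] at hdiag ⊢
        have hr2 : u.2 < μ.rowLen u.2 := YoungDiagram.mem_iff_lt_rowLen.mp hdiag
        have := μ.rowLen_anti u.2 u.1 h
        refine ⟨?_, ?_⟩ <;> simp only [A, B] <;> omega
    simp only [mem_filter, mem_range]
    exact ⟨cond_lt_L μ hcond, hcond⟩
  · intro u hu v hv huv
    simp only [mem_filter, YoungDiagram.mem_cells] at hu hv
    obtain ⟨-, hku⟩ := hu
    obtain ⟨-, hkv⟩ := hv
    have hm : min u.1 u.2 = min v.1 v.2 := huv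
    have h12 : u.1 = v.1 ∧ u.2 = v.2 := by omega
    exact Prod.ext h12.1 h12.2
  · intro i hi
    simp only [mem_filter, mem_range] at hi
    obtain ⟨hiL, hc⟩ := hi
    refine ⟨(i + (-k).toNat, i + k.toNat), ?_, ?_⟩
    · simp only [mem_filter, YoungDiagram.mem_cells]
      obtain ⟨h1, h2⟩ := hc
      simp only [A, B] at h1 h2
      constructor
      · rcases le_or_gt 0 k with hk | hk
        · have : (-k).toNat = 0 := by omega
          rw [this, Nat.add_zero, YoungDiagram.mem_iff_lt_rowLen]
          omega
        · have : k.toNat = 0 := by omega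
          rw [this, Nat.add_zero, YoungDiagram.mem_iff_lt_colLen]
          omega
      · push_cast; omega
    · simp only
      omega


/-- asymmetry in terms of μ itself -/
def Asym (m : ℕ) : Prop := ∀ i : ℕ, (i, i) ∈ μ → μ.rowLen i = μ.colLen i + m

lemma asym_iff_g (m : ℕ) : Asym μ m ↔ ∀ k : ℤ, g μ k = g μ (m - k) := by
  constructor
  · intro ha k
    unfold g
    congr 1
    apply Finset.filter_congr
    intro i _
    by_cases hd : (i, i) ∈ μ
    · have h := ha i hd
      simp only [cond, A, B, h, eq_iff_iff]
      push_cast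
      constructor <;> intro h' <;> omega
    · have h1 : μ.rowLen i ≤ i := by
        by_contra h
        exact hd (YoungDiagram.mem_iff_lt_rowLen.mpr (by omega))
      have h2 : μ.colLen i ≤ i := by
        by_contra h
        exact hd (YoungDiagram.mem_iff_lt_colLen.mpr (by omega))
      simp only [cond, A, B, eq_iff_iff]
      constructor <;> intro h' <;> omega
  · intro hg i hd
    have hA : 0 ≤ A μ i := by
      have := YoungDiagram.mem_iff_lt_rowLen.mp hd
      simp only [A]; omega
    have hB : 0 ≤ B μ i := by
      have := YoungDiagram.mem_iff_lt_colLen.mp hd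
      simp only [B]; omega
    have h1 : cond μ (-B μ i) i := ⟨le_refl _, by omega⟩
    have h2 : cond μ (A μ i) i := ⟨by omega, le_refl _⟩
    have h1' : cond μ ((m : ℤ) + B μ i) i := by
      rw [← lt_g_iff] at h1 ⊢
      rw [hg (-B μ i)] at h1
      convert h1 using 2
      ring
    have h2' : cond μ ((m : ℤ) - A μ i) i := by
      rw [← lt_g_iff] at h2 ⊢
      rw [hg (A μ i)] at h2
      exact h2
    have e1 : (m : ℤ) + B μ i ≤ A μ i := h1'.2
    have e2 : -B μ i ≤ (m : ℤ) - A μ i := h2'.1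
    have : A μ i = B μ i + m := by omega
    simp only [A, B] at this
    omega

lemma asym_iff_C (m : ℕ) :
    Asym μ m ↔ (C μ).map (fun c => (m : ℤ) - c) = C μ := by
  rw [asym_iff_g]
  constructor
  · intro hg
    ext k
    have : ((C μ).map (fun c => (m : ℤ) - c)).count k = (C μ).count ((m : ℤ) - k) := by
      have hinj : Function.Injective (fun c : ℤ => (m : ℤ) - c) := fun a b h => by
        simpa using h
      have := Multiset.count_map_eq_count' (fun c : ℤ => (m : ℤ) - c) (C μ) hinj ((m : ℤ) - k)
      simpa using this
    rw [this, count_C_eq_g, count_C_eq_g, hg]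
    congr 1
    ring
  · intro hC k
    rw [← count_C_eq_g, ← count_C_eq_g]
    conv_lhs => rw [← hC]
    have hinj : Function.Injective (fun c : ℤ => (m : ℤ) - c) := fun a b h => by
      simpa using h
    have := Multiset.count_map_eq_count' (fun c : ℤ => (m : ℤ) - c) (C μ) hinj ((m : ℤ) - k)
    simpa using this


open Polynomial in
lemma C_symm_of_prod (m : ℕ)
    (h : ∀ n : ℕ, L μ ≤ n → ((C μ).map (fun c : ℤ => (n : ℚ) + (c : ℚ))).prod
        = ((C μ).map (fun c : ℤ => (n : ℚ) + (m : ℚ) - (c : ℚ))).prod) :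
    (C μ).map (fun c => (m : ℤ) - c) = C μ := by
  set s : Multiset ℚ := (C μ).map (fun c : ℤ => (-(c : ℚ))) with hs
  set t : Multiset ℚ := (C μ).map (fun c : ℤ => ((c : ℚ) - (m : ℚ))) with ht
  set p : ℚ[X] := (s.map (fun a => X - Polynomial.C a)).prod with hpdef
  set q : ℚ[X] := (t.map (fun a => X - Polynomial.C a)).prod with hqdef
  have hst : s = t := by
    have hpq : p = q := by
      have hroot : ∀ n : ℕ, L μ ≤ n → (p - q).IsRoot (n : ℚ) := by
        intro n hn
        have hp : p.eval (n : ℚ) = ((C μ).map (fun c : ℤ => (n : ℚ) + (c : ℚ))).prod := by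
          simp only [hpdef, hs, eval_multiset_prod, Multiset.map_map, Function.comp_def,
            eval_sub, eval_X, eval_C, sub_neg_eq_add]
        have hq : q.eval (n : ℚ) = ((C μ).map (fun c : ℤ => (n : ℚ) + (m : ℚ) - (c : ℚ))).prod := by
          simp only [hqdef, ht, eval_multiset_prod, Multiset.map_map, Function.comp_def,
            eval_sub, eval_X, eval_C]
          apply congrArg
          apply Multiset.map_congr rfl
          intro c _
          ring
        simp only [Polynomial.IsRoot, eval_sub, hp, hq, h n hn, sub_self]
      have hsub : ((fun n : ℕ => (n : ℚ)) '' Set.Ici (L μ)) ⊆ {x : ℚ | (p - q).IsRoot x} := by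
        rintro x ⟨n, hn, rfl⟩
        exact hroot n hn
      have hinf : {x : ℚ | (p - q).IsRoot x}.Infinite :=
        Set.Infinite.mono hsub ((Set.Ici_infinite _).image
          (Set.injOn_of_injective Nat.cast_injective))
      have h0 := Polynomial.eq_zero_of_infinite_isRoot _ hinf
      exact sub_eq_zero.mp h0
    have := congrArg Polynomial.roots hpq
    rwa [hpdef, hqdef, Polynomial.roots_multiset_prod_X_sub_C,
      Polynomial.roots_multiset_prod_X_sub_C] at this
  -- now transfer back to ℤ
  have h1 : ((C μ).map (fun c : ℤ => -c)).map (fun z : ℤ => (z : ℚ))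
      = ((C μ).map (fun c : ℤ => c - (m : ℤ))).map (fun z : ℤ => (z : ℚ)) := by
    rw [Multiset.map_map, Multiset.map_map]
    rw [hs, ht] at hst
    calc Multiset.map ((fun z : ℤ => (z : ℚ)) ∘ fun c : ℤ => -c) (C μ)
        = Multiset.map (fun c : ℤ => (-(c : ℚ))) (C μ) :=
          Multiset.map_congr rfl (by intro c _; simp)
      _ = Multiset.map (fun c : ℤ => ((c : ℚ) - (m : ℚ))) (C μ) := hst
      _ = Multiset.map ((fun z : ℤ => (z : ℚ)) ∘ fun c : ℤ => c - (m : ℤ)) (C μ) :=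
          (Multiset.map_congr rfl (by intro c _; simp)).symm
  have h2 : (C μ).map (fun c : ℤ => -c) = (C μ).map (fun c : ℤ => c - (m : ℤ)) :=
    Multiset.map_injective (fun a b hab => by exact_mod_cast hab) h1
  have h3 := congrArg (Multiset.map (fun z : ℤ => -z)) h2
  rw [Multiset.map_map, Multiset.map_map] at h3
  simp only [Function.comp_def, neg_neg, Multiset.map_id', neg_sub] at h3
  exact h3.symm


/-- hook length of cell u -/
def hook (u : ℕ × ℕ) : ℕ := μ.rowLen u.1 + μ.colLen u.2 - u.1 - u.2 - 1

lemma hook_pos {u : ℕ × ℕ} (hu : u ∈ μ.cells) : 1 ≤ hook μ u := by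
  rw [YoungDiagram.mem_cells] at hu
  have h1 : u.2 < μ.rowLen u.1 := YoungDiagram.mem_iff_lt_rowLen.mp hu
  have h2 : u.1 < μ.colLen u.2 := YoungDiagram.mem_iff_lt_colLen.mp hu
  unfold hook; omega

/-- product of hook lengths -/
noncomputable def H : ℚ := ∏ u ∈ μ.cells, ((hook μ u : ℕ) : ℚ)

lemma H_ne_zero : H μ ≠ 0 := by
  unfold H
  rw [Finset.prod_ne_zero_iff]
  intro u hu
  have := hook_pos μ hu
  positivity

lemma dimF_eq (n : ℕ) :
    dimF n μ = (∏ u ∈ μ.cells, ((n : ℚ) + (u.2 : ℚ) - (u.1 : ℚ))) / H μ := by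
  unfold dimF H
  rw [← Finset.prod_div_distrib]
  apply Finset.prod_congr rfl
  intro u hu
  unfold hook
  ring_nf

lemma dimF_transpose (N : ℕ) :
    dimF N μ.transpose = (∏ u ∈ μ.cells, ((N : ℚ) + (u.1 : ℚ) - (u.2 : ℚ))) / H μ := by
  unfold dimF H
  rw [← Finset.prod_div_distrib]
  refine Finset.prod_bij' (fun v _ => Prod.swap v) (fun u _ => Prod.swap u) ?_ ?_ ?_ ?_ ?_
  · intro v hv
    rw [YoungDiagram.mem_cells] at hv ⊢
    rwa [YoungDiagram.mem_transpose] at hv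
  · intro u hu
    rw [YoungDiagram.mem_cells] at hu ⊢
    rwa [YoungDiagram.mem_transpose, Prod.swap_swap]
  · intro v _; exact Prod.swap_swap v
  · intro u _; exact Prod.swap_swap u
  · intro v hv
    rw [YoungDiagram.mem_cells, YoungDiagram.mem_transpose] at hv
    have h1 : v.swap.2 < μ.rowLen v.swap.1 := YoungDiagram.mem_iff_lt_rowLen.mp hv
    have h2 : v.swap.1 < μ.colLen v.swap.2 := YoungDiagram.mem_iff_lt_colLen.mp hv
    simp only [Prod.fst_swap, Prod.snd_swap] at h1 h2 ⊢
    have hden : μ.transpose.rowLen v.1 + μ.transpose.colLen v.2 - v.1 - v.2 - 1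
        = hook μ v.swap := by
      rw [YoungDiagram.rowLen_transpose, YoungDiagram.colLen_transpose]
      unfold hook
      simp only [Prod.fst_swap, Prod.snd_swap]
      omega
    rw [hden]
    simp only [hook, Prod.fst_swap, Prod.snd_swap]
    ring_nf

lemma P_eq (n : ℕ) : (∏ u ∈ μ.cells, ((n : ℚ) + (u.2 : ℚ) - (u.1 : ℚ)))
    = ((C μ).map (fun c : ℤ => (n : ℚ) + (c : ℚ))).prod := by
  rw [Finset.prod_eq_multiset_prod]
  unfold C
  rw [Multiset.map_map]
  apply congrArg
  apply Multiset.map_congr rfl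
  intro u _
  simp only [Function.comp_def]
  push_cast
  ring

lemma Q_eq (N : ℕ) : (∏ u ∈ μ.cells, ((N : ℚ) + (u.1 : ℚ) - (u.2 : ℚ)))
    = ((C μ).map (fun c : ℤ => (N : ℚ) - (c : ℚ))).prod := by
  rw [Finset.prod_eq_multiset_prod]
  unfold C
  rw [Multiset.map_map]
  apply congrArg
  apply Multiset.map_congr rfl
  intro u _
  simp only [Function.comp_def]
  push_cast
  ring


lemma isAsymmetric_transpose_iff (m : ℕ) :
    μ.transpose.IsAsymmetric m ↔ Asym μ m := by
  unfold YoungDiagram.IsAsymmetric Asym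
  constructor <;> intro h i hi
  · have := h i (by rw [YoungDiagram.mem_transpose]; exact hi)
    rwa [YoungDiagram.colLen_transpose, YoungDiagram.rowLen_transpose] at this
  · rw [YoungDiagram.colLen_transpose, YoungDiagram.rowLen_transpose]
    exact h i (by rwa [YoungDiagram.mem_transpose] at hi)

end AsymAux

/-- For a partition λ and m ≥ 0, dim F^(n)_λ = dim F^(m+n)_{λ'} holds for
every n ≥ ℓ(λ) if and only if λ' is m-asymmetric (equivalently, λ has Frobenius
coordinates (α+m | α) for some strict partition α). -/
theorem dim_eq_dim_conj_iff_asymmetric (μ : YoungDiagram) (m : ℕ) :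
    (∀ n : ℕ, μ.colLen 0 ≤ n → dimF n μ = dimF (m + n) μ.transpose) ↔
      μ.transpose.IsAsymmetric m := by
  rw [AsymAux.isAsymmetric_transpose_iff, AsymAux.asym_iff_C]
  constructor
  · intro hdim
    apply AsymAux.C_symm_of_prod μ m
    intro n hn
    have h := hdim n hn
    rw [AsymAux.dimF_eq, AsymAux.dimF_transpose] at h
    have h2 : (∏ u ∈ μ.cells, ((n : ℚ) + (u.2 : ℚ) - (u.1 : ℚ)))
        = ∏ u ∈ μ.cells, (((m + n : ℕ) : ℚ) + (u.1 : ℚ) - (u.2 : ℚ)) := by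
      have hH := AsymAux.H_ne_zero μ
      rw [div_eq_div_iff hH hH] at h
      exact mul_right_cancel₀ hH h
    rw [AsymAux.P_eq, AsymAux.Q_eq] at h2
    rw [h2]
    apply congrArg
    apply Multiset.map_congr rfl
    intro c _
    push_cast
    ring
  · intro hC n _
    rw [AsymAux.dimF_eq, AsymAux.dimF_transpose, AsymAux.P_eq, AsymAux.Q_eq]
    have : ((AsymAux.C μ).map (fun c : ℤ => (n : ℚ) + (c : ℚ))).prod
        = ((AsymAux.C μ).map (fun c : ℤ => ((m + n : ℕ) : ℚ) - (c : ℚ))).prod := by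
      conv_lhs => rw [← hC]
      rw [Multiset.map_map]
      apply congrArg
      apply Multiset.map_congr rfl
      intro c _
      simp only [Function.comp_def]
      push_cast
      ring
    rw [this]
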